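/- Let X be an inner product space over ℝ with complexification X_ℂ = X + iX (carrying the induced complex inner product), and let g : (T, ∞) → X for some T ∈ ℝ. Suppose g, viewed as an X_ℂ-valued function, has an asymptotic expansion g(t) ∼ Σ_{k=1}^∞ g_k(t) with g_k ∈ 𝓕_E(−μ_k, X_ℂ), where (μ_k) is a strictly increasing divergent sequence of nonnegative reals. Then g_k(t) ∈ X for all k ∈ ℕ and all t ∈ ℝ. -/

import Mathlib

open Filter

/-- `p : ℝ → Y` is a `Y`-valued polynomial (with `Y` a complex linear space). -/
def IsPolyFun {Y : Type*} [AddCommGroup Y] [Module ℂ Y] (p : ℝ → Y) : Prop :=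
  ∃ (d : ℕ) (c : ℕ → Y), ∀ t : ℝ, p t = ∑ j ∈ Finset.range (d + 1), ((t : ℂ) ^ j) • c j

/-- Membership in the class `𝓕_E(μ, Y)`. -/
def FEmem {Y : Type*} [AddCommGroup Y] [Module ℂ Y] (μ : ℝ) (g : ℝ → Y) : Prop :=
  ∃ (S : Finset ℂ) (p : ℂ → ℝ → Y),
    (∀ l ∈ S, l.re = μ) ∧ (∀ l ∈ S, IsPolyFun (p l)) ∧
    ∀ t : ℝ, g t = ∑ l ∈ S, Complex.exp (l * t) • p l t



section Aux
open intervalIntegral MeasureTheory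

private lemma osc (γ : ℝ) (hγ : γ ≠ 0) (j : ℕ) :
    ∃ C : ℝ, 0 ≤ C ∧ ∀ T : ℝ, 0 ≤ T →
      ‖∫ t in (0:ℝ)..T, (t:ℂ)^j * Complex.exp (Complex.I * γ * t)‖ ≤ C * (T+1)^j := by
  have hIγ : (Complex.I * γ) ≠ 0 := by
    simp [Complex.ext_iff, hγ]
  have hnIγ : ‖(Complex.I * (γ:ℂ))‖ = |γ| := by
    simp [map_mul]
  have hexpnorm : ∀ x : ℝ, ‖Complex.exp (Complex.I * γ * x)‖ = 1 := by
    intro x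
    rw [Complex.norm_exp]
    have : (Complex.I * γ * x).re = 0 := by simp [Complex.mul_re]
    rw [this, Real.exp_zero]
  induction j with
  | zero =>
    refine ⟨2/|γ|, by positivity, fun T hT => ?_⟩
    have h1 : ∫ t in (0:ℝ)..T, (t:ℂ)^0 * Complex.exp (Complex.I * γ * t)
        = (Complex.exp (Complex.I*γ*T) - Complex.exp (Complex.I*γ*(0:ℝ)))/(Complex.I*γ) := by
      simp only [pow_zero, one_mul]
      exact integral_exp_mul_complex hIγ
    rw [h1, pow_zero, mul_one]
    rw [norm_div, hnIγ]
    have h2 : ‖Complex.exp (Complex.I*γ*(T:ℝ)) - Complex.exp (Complex.I*γ*((0:ℝ):ℝ))‖ ≤ 2 := by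
      refine (norm_sub_le _ _).trans ?_
      rw [hexpnorm, hexpnorm]; norm_num
    have : (0:ℝ) < |γ| := abs_pos.mpr hγ
    rw [div_le_div_iff₀ this this] at *
    · nlinarith
  | succ j ihj =>
    obtain ⟨C, hC0, hC⟩ := ihj
    refine ⟨(1 + (j+1)*C)/|γ|, by positivity, fun T hT => ?_⟩
    have hu : ∀ x ∈ Set.uIcc (0:ℝ) T, HasDerivAt (fun t:ℝ => ((t:ℂ))^(j+1)) (((j:ℂ)+1) * (x:ℂ)^j) x := by
      intro x _
      have h := (hasDerivAt_pow (j+1) ((x:ℝ):ℂ)).comp_ofReal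
      simpa using h
    have hv : ∀ x ∈ Set.uIcc (0:ℝ) T, HasDerivAt (fun t:ℝ => Complex.exp (Complex.I*γ*t)/(Complex.I*γ)) (Complex.exp (Complex.I*γ*x)) x := by
      intro x _
      have h1 : HasDerivAt (fun z:ℂ => Complex.exp (Complex.I*γ*z)) (Complex.exp (Complex.I*γ*x) * (Complex.I*γ)) (x:ℂ) := by
        have h0 := ((hasDerivAt_id ((x:ℝ):ℂ)).const_mul (Complex.I*γ)).cexp
        simpa using h0
      have h2 := (h1.comp_ofReal).div_const (Complex.I*γ)
      simpa [mul_div_assoc, div_self hIγ] using h2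
    have hcont1 : Continuous (fun t:ℝ => ((j:ℂ)+1) * (t:ℂ)^j) := by
      exact continuous_const.mul (Complex.continuous_ofReal.pow j)
    have hcont2 : Continuous (fun t:ℝ => Complex.exp (Complex.I*γ*t)) := by
      exact Complex.continuous_exp.comp (continuous_const.mul Complex.continuous_ofReal)
    have IBP := integral_mul_deriv_eq_deriv_mul hu hv
      (hcont1.intervalIntegrable 0 T) (hcont2.intervalIntegrable 0 T)
    rw [IBP]
    have hrw : ∫ x in (0:ℝ)..T, ((j:ℂ)+1) * (x:ℂ)^j * (Complex.exp (Complex.I*γ*x)/(Complex.I*γ))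
        = (((j:ℂ)+1)/(Complex.I*γ)) * ∫ x in (0:ℝ)..T, (x:ℂ)^j * Complex.exp (Complex.I*γ*x) := by
      rw [← intervalIntegral.integral_const_mul]
      congr 1; funext x; ring
    rw [hrw]
    have e0 : ((0:ℝ):ℂ)^(j+1) = 0 := by simp
    rw [e0, zero_mul, sub_zero]
    have hb1 : ‖(T:ℂ)^(j+1) * (Complex.exp (Complex.I*γ*T)/(Complex.I*γ))‖ = T^(j+1)/|γ| := by
      rw [norm_mul, norm_div, hexpnorm, hnIγ, norm_pow, Complex.norm_real, Real.norm_eq_abs,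
        abs_of_nonneg hT]
      ring
    have hb2 : ‖(((j:ℂ)+1)/(Complex.I*γ)) * ∫ x in (0:ℝ)..T, (x:ℂ)^j * Complex.exp (Complex.I*γ*x)‖
        ≤ ((j+1)/|γ|) * (C * (T+1)^j) := by
      rw [norm_mul, norm_div, hnIγ]
      have hn : ‖((j:ℂ)+1)‖ = (j:ℝ)+1 := by
        rw [show ((j:ℂ)+1) = ((j+1 : ℕ):ℂ) by push_cast; ring,
          Complex.norm_natCast]
        push_cast; ring
      rw [hn]
      exact mul_le_mul_of_nonneg_left (hC T hT) (by positivity)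
    refine (norm_sub_le _ _).trans ?_
    rw [hb1]
    have hT1 : T^(j+1) ≤ (T+1)^(j+1) := by
      apply pow_le_pow_left₀ hT; linarith
    have hT2 : (T+1)^j ≤ (T+1)^(j+1) := by
      apply pow_le_pow_right₀; linarith; omega
    have hγpos : (0:ℝ) < |γ| := abs_pos.mpr hγ
    calc T^(j+1)/|γ| + ‖(((j:ℂ)+1)/(Complex.I*γ)) * ∫ x in (0:ℝ)..T, (x:ℂ)^j * Complex.exp (Complex.I*γ*x)‖
        ≤ T^(j+1)/|γ| + ((j+1)/|γ|) * (C * (T+1)^j) := add_le_add le_rfl hb2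
      _ ≤ (T+1)^(j+1)/|γ| + ((j+1)/|γ|) * (C * (T+1)^(j+1)) := by gcongr
      _ = (1 + (j+1)*C)/|γ| * (T+1)^(j+1) := by field_simp

private lemma div_aux {a b c : ℝ} (h : a ≤ b) (hc : 0 ≤ c) : a / c ≤ b / c := by
  rw [div_eq_mul_inv, div_eq_mul_inv]
  exact mul_le_mul_of_nonneg_right h (inv_nonneg.mpr hc)

private lemma top_coeff (d : ℕ) (S : Finset ℂ) (hS : ∀ l ∈ S, l.re = 0) (c : ℂ → ℕ → ℂ)
    (hten : Tendsto (fun t : ℝ =>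
        ∑ l ∈ S, ∑ j ∈ Finset.range (d+1), c l j * (t:ℂ)^j * Complex.exp (l*t))
      atTop (nhds 0)) (l₀ : ℂ) (hl₀ : l₀ ∈ S) : c l₀ d = 0 := by
  set ψ : ℝ → ℂ := fun t => ∑ l ∈ S, ∑ j ∈ Finset.range (d+1), c l j * (t:ℂ)^j * Complex.exp (l*t) with hψ
  set F : ℂ → ℕ → ℝ → ℂ := fun l j t => (t:ℂ)^j * Complex.exp ((l - l₀)*t) with hF
  have hcont : ∀ l j, Continuous (F l j) := by
    intro l j
    exact (Complex.continuous_ofReal.pow j).mul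
      (Complex.continuous_exp.comp (continuous_const.mul Complex.continuous_ofReal))
  have hInt : ∀ l j (a b : ℝ), IntervalIntegrable (F l j) volume a b := fun l j a b =>
    (hcont l j).intervalIntegrable a b
  set B : ℂ → ℕ → ℝ → ℂ := fun l j T => (∫ t in T..(2*T), F l j t) / (T:ℂ)^(d+1) with hB
  set A : ℝ → ℂ := fun T => (∫ t in T..(2*T), ψ t * Complex.exp (-l₀*t)) / (T:ℂ)^(d+1) with hA
  set κ : ℂ := ((2:ℂ)^(d+1) - 1)/((d:ℂ)+1) with hκ
  -- rewrite A as a finite sum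
  have hAeq : ∀ T : ℝ, A T = ∑ l ∈ S, ∑ j ∈ Finset.range (d+1), c l j * B l j T := by
    intro T
    have hintgd : ∀ t : ℝ, ψ t * Complex.exp (-l₀*t)
        = ∑ l ∈ S, ∑ j ∈ Finset.range (d+1), c l j * F l j t := by
      intro t
      rw [hψ]
      simp only []
      rw [Finset.sum_mul]
      refine Finset.sum_congr rfl fun l _ => ?_
      rw [Finset.sum_mul]
      refine Finset.sum_congr rfl fun j _ => ?_
      simp only [hF]
      rw [show ((l - l₀) * (t:ℂ)) = l*t + (-l₀*t) by ring, Complex.exp_add]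
      ring
    have h1 : (∫ t in T..(2*T), ψ t * Complex.exp (-l₀*t))
        = ∑ l ∈ S, ∑ j ∈ Finset.range (d+1), c l j * ∫ t in T..(2*T), F l j t := by
      calc (∫ t in T..(2*T), ψ t * Complex.exp (-l₀*t))
          = ∫ t in T..(2*T), ∑ l ∈ S, ∑ j ∈ Finset.range (d+1), c l j * F l j t :=
            intervalIntegral.integral_congr (fun t _ => hintgd t)
        _ = ∑ l ∈ S, ∫ t in T..(2*T), ∑ j ∈ Finset.range (d+1), c l j * F l j t :=
            intervalIntegral.integral_finset_sum (fun l _ =>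
              (continuous_finset_sum _ (fun j _ =>
                continuous_const.mul (hcont l j))).intervalIntegrable _ _)
        _ = ∑ l ∈ S, ∑ j ∈ Finset.range (d+1), ∫ t in T..(2*T), c l j * F l j t :=
            Finset.sum_congr rfl fun l _ =>
              intervalIntegral.integral_finset_sum (fun j _ =>
                (continuous_const.mul (hcont l j)).intervalIntegrable _ _)
        _ = ∑ l ∈ S, ∑ j ∈ Finset.range (d+1), c l j * ∫ t in T..(2*T), F l j t :=
            Finset.sum_congr rfl fun l _ => Finset.sum_congr rfl fun j _ =>
              intervalIntegral.integral_const_mul _ _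
    simp only [hA, hB]
    rw [h1, Finset.sum_div]
    refine Finset.sum_congr rfl fun l _ => ?_
    rw [Finset.sum_div]
    exact Finset.sum_congr rfl fun j _ => mul_div_assoc _ _ _
  -- A tends to 0
  have hA0 : Tendsto A atTop (nhds 0) := by
    rw [NormedAddCommGroup.tendsto_nhds_zero]
    intro ε hε
    have h1 := NormedAddCommGroup.tendsto_nhds_zero.mp hten (ε/2) (by positivity)
    rw [eventually_atTop] at h1
    obtain ⟨t₀, ht₀⟩ := h1
    filter_upwards [eventually_ge_atTop (max t₀ 1)] with T hT
    have hT1 : (1:ℝ) ≤ T := le_trans (le_max_right _ _) hT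
    have hTt₀ : t₀ ≤ T := le_trans (le_max_left _ _) hT
    have hTpos : (0:ℝ) < T := lt_of_lt_of_le one_pos hT1
    have hnormexp : ∀ x : ℝ, ‖Complex.exp (-l₀*x)‖ = 1 := by
      intro x
      rw [Complex.norm_exp]
      have : ((-l₀) * (x:ℂ)).re = 0 := by
        simp [Complex.mul_re, hS l₀ hl₀]
      rw [this, Real.exp_zero]
    have hbd : ‖∫ t in T..(2*T), ψ t * Complex.exp (-l₀*t)‖ ≤ (ε/2) * |2*T - T| := by
      apply intervalIntegral.norm_integral_le_of_norm_le_const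
      intro x hx
      rw [Set.uIoc_of_le (by linarith)] at hx
      have hx1 : t₀ ≤ x := le_trans hTt₀ (le_of_lt hx.1)
      rw [norm_mul, hnormexp, mul_one]
      exact le_of_lt (ht₀ x hx1)
    have hTnorm : ‖((T:ℂ))^(d+1)‖ = T^(d+1) := by
      rw [norm_pow, Complex.norm_real, Real.norm_eq_abs, abs_of_pos hTpos]
    simp only [hA, norm_div, hTnorm]
    have h2T : |2*T - T| = T := by rw [abs_of_pos (by linarith)]; ring_nf
    have hTpow : T ≤ T^(d+1) := le_self_pow₀ hT1 (Nat.succ_ne_zero d)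
    calc ‖∫ t in T..(2*T), ψ t * Complex.exp (-l₀*t)‖ / T^(d+1)
        ≤ ((ε/2) * |2*T - T|) / T^(d+1) :=
          div_aux hbd (by positivity)
      _ = (ε/2) * (T / T^(d+1)) := by rw [h2T]; ring
      _ ≤ (ε/2) * 1 := mul_le_mul_of_nonneg_left
          (by rw [div_le_one (by positivity)]; exact hTpow) (by positivity)
      _ < ε := by linarith
  -- limits of B l₀ j
  have hBl₀ : ∀ j, j ≤ d → Tendsto (fun T => B l₀ j T) atTop
      (nhds (if j = d then κ else 0)) := by
    intro j hj
    have hFval : ∀ t : ℝ, F l₀ j t = ((t^j : ℝ) : ℂ) := by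
      intro t
      simp only [hF, sub_self, zero_mul, Complex.exp_zero, mul_one, Complex.ofReal_pow]
    set r : ℝ → ℝ := fun T => ((2*T)^(j+1) - T^(j+1))/((j:ℝ)+1)/T^(d+1) with hr
    have hBeq : ∀ T : ℝ, B l₀ j T = ((r T : ℝ) : ℂ) := by
      intro T
      simp only [hB]
      rw [intervalIntegral.integral_congr (fun t _ => hFval t), intervalIntegral.integral_ofReal,
        integral_pow, hr]
      push_cast
      ring
    have hrlim : Tendsto r atTop (nhds (if j = d then ((2:ℝ)^(d+1) - 1)/((d:ℝ)+1) else 0)) := by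
      have heq : ∀ᶠ T in atTop, r T = ((2:ℝ)^(j+1) - 1)/((j:ℝ)+1) * (T⁻¹)^(d-j) := by
        filter_upwards [eventually_ge_atTop (1:ℝ)] with T hT1
        have hTne : T ≠ 0 := by linarith
        have hpow : T^(d+1) = T^(j+1) * T^(d-j) := by
          rw [← pow_add]; congr 1; omega
        rw [hr]
        simp only [hpow, mul_pow, inv_pow]
        field_simp
      rcases eq_or_ne j d with hjd | hjd
      · subst hjd
        rw [if_pos rfl]
        refine Tendsto.congr' ?_ tendsto_const_nhds
        filter_upwards [heq] with T h
        rw [h, Nat.sub_self, pow_zero, mul_one]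
      · rw [if_neg hjd]
        have hd0 : d - j ≠ 0 := by omega
        have h0 : Tendsto (fun T:ℝ => ((2:ℝ)^(j+1) - 1)/((j:ℝ)+1) * (T⁻¹)^(d-j)) atTop (nhds 0) := by
          have h1 := (tendsto_inv_atTop_zero (𝕜 := ℝ)).pow (d-j)
          rw [zero_pow hd0] at h1
          simpa using h1.const_mul (((2:ℝ)^(j+1) - 1)/((j:ℝ)+1))
        exact Tendsto.congr' (heq.mono fun T h => h.symm) h0
    have hval : (((if j = d then ((2:ℝ)^(d+1) - 1)/((d:ℝ)+1) else 0 : ℝ)) : ℂ)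
        = (if j = d then κ else 0) := by
      rcases eq_or_ne j d with hjd | hjd
      · subst hjd
        rw [if_pos rfl, if_pos rfl, hκ]
        push_cast
        ring
      · simp [hjd]
    rw [← hval]
    exact Tendsto.congr (fun T => (hBeq T).symm)
      ((Complex.continuous_ofReal.tendsto _).comp hrlim)
  -- limits of B l j for l ≠ l₀
  have hBl : ∀ l ∈ S, l ≠ l₀ → ∀ j, j ≤ d → Tendsto (fun T => B l j T) atTop (nhds 0) := by
    intro l hl hne j hj
    set γ : ℝ := (l - l₀).im with hγdef
    have hγ : γ ≠ 0 := by
      intro h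
      apply hne
      have hre : (l - l₀).re = 0 := by rw [Complex.sub_re, hS l hl, hS l₀ hl₀, sub_self]
      have : l - l₀ = 0 := Complex.ext hre h
      exact sub_eq_zero.mp this
    have hll₀ : (l - l₀) = Complex.I * γ := by
      apply Complex.ext
      · rw [Complex.sub_re, hS l hl, hS l₀ hl₀, sub_self]; simp
      · simp [hγdef]
    obtain ⟨C, hC0, hC⟩ := osc γ hγ j
    rw [tendsto_zero_iff_norm_tendsto_zero]
    apply squeeze_zero' (Filter.Eventually.of_forall fun T => norm_nonneg _)
      (g := fun T => (2*C*3^d)/T)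
    · filter_upwards [eventually_ge_atTop (1:ℝ)] with T hT1
      have hTpos : (0:ℝ) < T := lt_of_lt_of_le one_pos hT1
      have hsub : (∫ t in T..(2*T), F l j t)
          = (∫ t in (0:ℝ)..(2*T), F l j t) - (∫ t in (0:ℝ)..T, F l j t) :=
        (intervalIntegral.integral_interval_sub_left (hInt l j 0 (2*T)) (hInt l j 0 T)).symm
      have hFexp : ∀ (b : ℝ), (∫ t in (0:ℝ)..b, F l j t)
          = ∫ t in (0:ℝ)..b, (t:ℂ)^j * Complex.exp (Complex.I * γ * t) := by
        intro b
        refine intervalIntegral.integral_congr fun t _ => ?_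
        simp only [hF]
        rw [hll₀]
      have hb1 : ‖∫ t in (0:ℝ)..(2*T), F l j t‖ ≤ C * (2*T+1)^j := by
        rw [hFexp]; exact hC (2*T) (by linarith)
      have hb2 : ‖∫ t in (0:ℝ)..T, F l j t‖ ≤ C * (T+1)^j := by
        rw [hFexp]; exact hC T (by linarith)
      have hkey : ‖∫ t in T..(2*T), F l j t‖ ≤ 2*C*(3*T)^j := by
        rw [hsub]
        refine (norm_sub_le _ _).trans ?_
        have h1 : C * (2*T+1)^j ≤ C * (3*T)^j := by gcongr <;> linarith
        have h2 : C * (T+1)^j ≤ C * (3*T)^j := by gcongr <;> linarith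
        linarith
      have hTnorm : ‖((T:ℂ))^(d+1)‖ = T^(d+1) := by
        rw [norm_pow, Complex.norm_real, Real.norm_eq_abs, abs_of_pos hTpos]
      simp only [hB, norm_div, hTnorm]
      have hpowj : (3*T)^j ≤ 3^d * T^d := by
        calc (3*T)^j ≤ (3*T)^d := pow_le_pow_right₀ (by linarith) hj
          _ = 3^d * T^d := mul_pow 3 T d
      calc ‖∫ t in T..(2*T), F l j t‖ / T^(d+1)
          ≤ (2*C*(3*T)^j) / T^(d+1) := div_aux hkey (by positivity)
        _ ≤ (2*C*(3^d*T^d)) / T^(d+1) := by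
            apply div_aux _ (by positivity)
            have := mul_le_mul_of_nonneg_left hpowj (by positivity : (0:ℝ) ≤ 2*C)
            linarith
        _ = (2*C*3^d)/T := by
            rw [pow_succ]
            field_simp
    · exact tendsto_const_nhds.div_atTop tendsto_id
  -- combine into limit of the sum
  have hsum : Tendsto A atTop (nhds (c l₀ d * κ)) := by
    have hterm : ∀ l ∈ S, ∀ j ∈ Finset.range (d+1),
        Tendsto (fun T => c l j * B l j T) atTop
          (nhds (if l = l₀ ∧ j = d then c l₀ d * κ else 0)) := by
      intro l hl j hj
      have hjd : j ≤ d := by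
        have := Finset.mem_range.mp hj; omega
      rcases eq_or_ne l l₀ with hll | hll
      · subst hll
        rcases eq_or_ne j d with hjd' | hjd'
        · subst hjd'
          have h1 := (hBl₀ j le_rfl).const_mul (c l j)
          rw [if_pos rfl] at h1
          simpa using h1
        · have h1 := (hBl₀ j hjd).const_mul (c l j)
          rw [if_neg hjd'] at h1
          simp only [hjd', and_false, if_false]
          simpa using h1
      · simp only [hll, false_and, if_false]
        have h1 := (hBl l hl hll j hjd).const_mul (c l j)
        simpa using h1
    have htot := tendsto_finset_sum S (fun l hl =>
      tendsto_finset_sum (Finset.range (d+1)) (fun j hj => hterm l hl j hj))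
    have hval : (∑ l ∈ S, ∑ j ∈ Finset.range (d+1),
        (if l = l₀ ∧ j = d then c l₀ d * κ else 0)) = c l₀ d * κ := by
      rw [Finset.sum_eq_single l₀]
      · rw [Finset.sum_eq_single d]
        · simp
        · intro j _ hjne; simp [hjne]
        · intro h; exact absurd (Finset.self_mem_range_succ d) h
      · intro l _ hlne
        apply Finset.sum_eq_zero
        intro j _
        simp [hlne]
      · intro h; exact absurd hl₀ h
    rw [hval] at htot
    exact htot.congr (fun T => (hAeq T).symm)
  -- conclude
  have huniq : c l₀ d * κ = 0 := tendsto_nhds_unique hsum hA0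
  have hκne : κ ≠ 0 := by
    rw [hκ]
    apply div_ne_zero
    · rw [show ((2:ℂ)^(d+1) - 1) = (((2:ℝ)^(d+1) - 1 : ℝ) : ℂ) by push_cast; ring]
      rw [Complex.ofReal_ne_zero]
      have : (1:ℝ) < 2^(d+1) := one_lt_pow₀ (by norm_num) (Nat.succ_ne_zero d)
      linarith
    · exact Nat.cast_add_one_ne_zero d
  exact (mul_eq_zero.mp huniq).resolve_right hκne

private lemma scalar_vanish (d : ℕ) : ∀ (S : Finset ℂ), (∀ l ∈ S, l.re = 0) →
    ∀ (c : ℂ → ℕ → ℂ),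
    Tendsto (fun t : ℝ => ∑ l ∈ S, ∑ j ∈ Finset.range (d+1),
      c l j * (t:ℂ)^j * Complex.exp (l*t)) atTop (nhds 0) →
    ∀ l ∈ S, ∀ j, j ≤ d → c l j = 0 := by
  induction d with
  | zero =>
    intro S hS c hten l hl j hj
    have hj0 : j = 0 := Nat.le_zero.mp hj
    subst hj0
    exact top_coeff 0 S hS c hten l hl
  | succ e ih =>
    intro S hS c hten l hl j hj
    have htop : ∀ l' ∈ S, c l' (e+1) = 0 := fun l' hl' => top_coeff (e+1) S hS c hten l' hl'
    have hten' : Tendsto (fun t : ℝ => ∑ l ∈ S, ∑ j ∈ Finset.range (e+1),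
        c l j * (t:ℂ)^j * Complex.exp (l*t)) atTop (nhds 0) := by
      refine hten.congr fun t => ?_
      refine Finset.sum_congr rfl fun l' hl' => ?_
      rw [Finset.sum_range_succ, htop l' hl', zero_mul, zero_mul, add_zero]
    rcases eq_or_ne j (e+1) with hje | hje
    · subst hje; exact htop l hl
    · exact ih S hS c hten' l hl j (by omega)

private lemma pad_sum {M : Type*} [AddCommMonoid M] (g : ℕ → M) (d D : ℕ) (h : d ≤ D) :
    ∑ j ∈ Finset.range (D+1), (if j < d+1 then g j else 0) = ∑ j ∈ Finset.range (d+1), g j := by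
  calc ∑ j ∈ Finset.range (D+1), (if j < d+1 then g j else 0)
      = ∑ j ∈ Finset.range (d+1), (if j < d+1 then g j else 0) :=
        (Finset.sum_subset (Finset.range_subset_range.mpr (by omega))
          (fun x _ hx => if_neg (by simpa using hx))).symm
    _ = ∑ j ∈ Finset.range (d+1), g j :=
        Finset.sum_congr rfl fun j hj => if_pos (Finset.mem_range.mp hj)

private lemma uniform_rep (S : Finset ℂ) (q : ℂ → ℝ → ℂ)
    (hq : ∀ l ∈ S, ∃ (d : ℕ) (cf : ℕ → ℂ), ∀ t : ℝ, q l t = ∑ j ∈ Finset.range (d+1), cf j * (t:ℂ)^j) :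
    ∃ (d : ℕ) (cc : ℂ → ℕ → ℂ), ∀ l ∈ S, ∀ t : ℝ,
      q l t = ∑ j ∈ Finset.range (d+1), cc l j * (t:ℂ)^j := by
  induction S using Finset.induction_on with
  | empty => exact ⟨0, fun _ _ => 0, fun l hl => absurd hl (Finset.notMem_empty l)⟩
  | @insert a s ha ih =>
    obtain ⟨d₀, cf₀, h₀⟩ := hq a (Finset.mem_insert_self a s)
    obtain ⟨d₁, cc₁, h₁⟩ := ih (fun l hl => hq l (Finset.mem_insert_of_mem hl))
    refine ⟨max d₀ d₁, fun l j => if l = a then (if j < d₀+1 then cf₀ j else 0)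
      else (if j < d₁+1 then cc₁ l j else 0), ?_⟩
    intro l hl t
    rcases Finset.mem_insert.mp hl with rfl | hl'
    · simp only [eq_self_iff_true, if_true]
      rw [h₀ t, ← pad_sum (fun j => cf₀ j * (t:ℂ)^j) d₀ (max d₀ d₁) (le_max_left _ _)]
      exact Finset.sum_congr rfl fun j _ => by rw [ite_mul, zero_mul]
    · have hne : l ≠ a := by rintro rfl; exact ha hl'
      simp only [hne, if_false]
      rw [h₁ l hl' t, ← pad_sum (fun j => cc₁ l j * (t:ℂ)^j) d₁ (max d₀ d₁) (le_max_right _ _)]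
      exact Finset.sum_congr rfl fun j _ => by rw [ite_mul, zero_mul]

section closure

variable {Y : Type*} [AddCommGroup Y] [Module ℂ Y]

private lemma isPolyFun_zero : IsPolyFun (fun _ : ℝ => (0:Y)) :=
  ⟨0, fun _ => 0, by simp⟩

private lemma isPolyFun_smul_pad (d D : ℕ) (h : d ≤ D) (c : ℕ → Y) (t : ℝ) :
    ∑ j ∈ Finset.range (D+1), ((t:ℂ)^j) • (if j < d+1 then c j else 0)
      = ∑ j ∈ Finset.range (d+1), ((t:ℂ)^j) • c j := by
  rw [← pad_sum (fun j => ((t:ℂ)^j) • c j) d D h]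
  exact Finset.sum_congr rfl fun j _ => by split <;> simp

private lemma isPolyFun_sub {p q : ℝ → Y} (hp : IsPolyFun p) (hq : IsPolyFun q) :
    IsPolyFun (fun t => p t - q t) := by
  obtain ⟨d₀, c₀, h₀⟩ := hp
  obtain ⟨d₁, c₁, h₁⟩ := hq
  refine ⟨max d₀ d₁, fun j => (if j < d₀+1 then c₀ j else 0) - (if j < d₁+1 then c₁ j else 0),
    fun t => ?_⟩
  have : ∀ j : ℕ, ((t:ℂ)^j) • ((if j < d₀+1 then c₀ j else 0) - (if j < d₁+1 then c₁ j else 0))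
      = ((t:ℂ)^j) • (if j < d₀+1 then c₀ j else 0) - ((t:ℂ)^j) • (if j < d₁+1 then c₁ j else 0) :=
    fun j => smul_sub _ _ _
  simp only [this]
  rw [Finset.sum_sub_distrib, isPolyFun_smul_pad d₀ (max d₀ d₁) (le_max_left _ _),
    isPolyFun_smul_pad d₁ (max d₀ d₁) (le_max_right _ _), h₀, h₁]

private lemma isPolyFun_neg {p : ℝ → Y} (hp : IsPolyFun p) : IsPolyFun (fun t => - p t) := by
  have := isPolyFun_sub isPolyFun_zero hp
  simpa using this

private lemma sum_union_ite (S' U : Finset ℂ) (hsub : S' ⊆ U) (p : ℂ → ℝ → Y) (t : ℝ) :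
    ∑ l ∈ U, Complex.exp (l*t) • (if l ∈ S' then p l t else 0)
      = ∑ l ∈ S', Complex.exp (l*t) • p l t := by
  rw [← Finset.sum_subset hsub (fun x _ hx => by rw [if_neg hx, smul_zero])]
  exact Finset.sum_congr rfl fun l hl => by rw [if_pos hl]

private lemma FEmem_sub {μ : ℝ} {f g : ℝ → Y} (hf : FEmem μ f) (hg : FEmem μ g) :
    FEmem μ (fun t => f t - g t) := by
  obtain ⟨S₁, p₁, hre₁, hpoly₁, hsum₁⟩ := hf
  obtain ⟨S₂, p₂, hre₂, hpoly₂, hsum₂⟩ := hg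
  refine ⟨S₁ ∪ S₂, fun l t => (if l ∈ S₁ then p₁ l t else 0) - (if l ∈ S₂ then p₂ l t else 0),
    ?_, ?_, ?_⟩
  · intro l hl
    rcases Finset.mem_union.mp hl with h | h
    · exact hre₁ l h
    · exact hre₂ l h
  · intro l _
    by_cases h1 : l ∈ S₁ <;> by_cases h2 : l ∈ S₂
    · simp only [if_pos h1, if_pos h2]
      exact isPolyFun_sub (hpoly₁ l h1) (hpoly₂ l h2)
    · simp only [if_pos h1, if_neg h2, sub_zero]
      exact hpoly₁ l h1
    · simp only [if_neg h1, if_pos h2, zero_sub]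
      exact isPolyFun_neg (hpoly₂ l h2)
    · simp only [if_neg h1, if_neg h2, sub_zero]
      exact isPolyFun_zero
  · intro t
    have hdist : ∀ l : ℂ, Complex.exp (l*t) •
        ((if l ∈ S₁ then p₁ l t else 0) - (if l ∈ S₂ then p₂ l t else 0))
        = Complex.exp (l*t) • (if l ∈ S₁ then p₁ l t else 0)
          - Complex.exp (l*t) • (if l ∈ S₂ then p₂ l t else 0) := fun l => smul_sub _ _ _
    simp only [hdist]
    rw [Finset.sum_sub_distrib,
      sum_union_ite S₁ (S₁ ∪ S₂) Finset.subset_union_left p₁ t,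
      sum_union_ite S₂ (S₁ ∪ S₂) Finset.subset_union_right p₂ t,
      hsum₁ t, hsum₂ t]

end closure

section conj

variable {Y : Type*} [AddCommGroup Y] [Module ℂ Y]
variable (conjY : Y → Y)
variable (hconj_add : ∀ a b : Y, conjY (a + b) = conjY a + conjY b)
variable (hconj_smul : ∀ (c : ℂ) (v : Y), conjY (c • v) = (starRingEnd ℂ c) • conjY v)

include hconj_smul in
private lemma conj_zero : conjY 0 = 0 := by
  have := hconj_smul 0 0
  simpa using this

include hconj_add hconj_smul in
private lemma conj_sum {ι : Type*} (s : Finset ι) (f : ι → Y) :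
    conjY (∑ i ∈ s, f i) = ∑ i ∈ s, conjY (f i) := by
  induction s using Finset.cons_induction with
  | empty => simpa using conj_zero conjY hconj_smul
  | cons a s ha ih => rw [Finset.sum_cons, hconj_add, ih, Finset.sum_cons]

include hconj_add hconj_smul in
private lemma conj_sub (a b : Y) : conjY (a - b) = conjY a - conjY b := by
  have h1 : a - b = a + (-1:ℂ) • b := by rw [neg_one_smul]; exact sub_eq_add_neg a b
  rw [h1, hconj_add, hconj_smul]
  simp [sub_eq_add_neg]

include hconj_add hconj_smul in
private lemma isPolyFun_conj {p : ℝ → Y} (hp : IsPolyFun p) :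
    IsPolyFun (fun t => conjY (p t)) := by
  obtain ⟨d, c, hc⟩ := hp
  refine ⟨d, fun j => conjY (c j), fun t => ?_⟩
  show conjY (p t) = _
  rw [hc t, conj_sum conjY hconj_add hconj_smul]
  refine Finset.sum_congr rfl fun j _ => ?_
  rw [hconj_smul]
  congr 1
  rw [map_pow, Complex.conj_ofReal]

include hconj_add hconj_smul in
private lemma FEmem_conj {μ : ℝ} {f : ℝ → Y} (hf : FEmem μ f) :
    FEmem μ (fun t => conjY (f t)) := by
  obtain ⟨S, p, hre, hpoly, hsum⟩ := hf
  refine ⟨S.image (starRingEnd ℂ), fun l t => conjY (p ((starRingEnd ℂ) l) t), ?_, ?_, ?_⟩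
  · intro l hl
    obtain ⟨l', hl', rfl⟩ := Finset.mem_image.mp hl
    rw [Complex.conj_re]
    exact hre l' hl'
  · intro l hl
    obtain ⟨l', hl', rfl⟩ := Finset.mem_image.mp hl
    simp only [Complex.conj_conj]
    exact isPolyFun_conj conjY hconj_add hconj_smul (hpoly l' hl')
  · intro t
    show conjY (f t) = _
    rw [hsum t, conj_sum conjY hconj_add hconj_smul,
      Finset.sum_image (fun x _ y _ h => by
        have := congrArg (starRingEnd ℂ) h
        simpa using this)]
    refine Finset.sum_congr rfl fun l hl => ?_
    rw [hconj_smul, ← Complex.exp_conj, map_mul, Complex.conj_ofReal]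
    simp only [Complex.conj_conj]

end conj

private lemma core {Y : Type*} [NormedAddCommGroup Y] [InnerProductSpace ℂ Y]
    (μ ν : ℝ) (hμν : μ < ν) (h : ℝ → Y) (hF : FEmem (-μ) h)
    (C : ℝ) (hbd : ∀ᶠ t in atTop, ‖h t‖ ≤ C * Real.exp (-ν * t)) :
    ∀ t₀ : ℝ, h t₀ = 0 := by
  obtain ⟨S, p, hre, hpoly, hsum⟩ := hF
  intro t₀
  set w : Y := h t₀ with hw
  -- the scalar function
  set q : ℂ → ℝ → ℂ := fun l t => (inner ℂ w (p l t) : ℂ) with hqdef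
  have hq : ∀ l ∈ S, ∃ (dd : ℕ) (cf : ℕ → ℂ), ∀ t : ℝ,
      q l t = ∑ j ∈ Finset.range (dd+1), cf j * (t:ℂ)^j := by
    intro l hl
    obtain ⟨dd, cv, hcv⟩ := hpoly l hl
    refine ⟨dd, fun j => (inner ℂ w (cv j) : ℂ), fun t => ?_⟩
    rw [hqdef]
    simp only []
    rw [hcv t, inner_sum]
    exact Finset.sum_congr rfl fun j _ => by rw [inner_smul_right]; ring
  obtain ⟨d, cc, hcc⟩ := uniform_rep S q hq
  have hφ : ∀ t : ℝ, (inner ℂ w (h t) : ℂ) = ∑ l ∈ S, Complex.exp (l*t) * q l t := by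
    intro t
    rw [hsum t, inner_sum]
    exact Finset.sum_congr rfl fun l _ => by rw [inner_smul_right]
  -- shifted exponents
  set S' : Finset ℂ := S.image (fun l => l + (μ:ℂ)) with hS'def
  have hS' : ∀ l' ∈ S', l'.re = 0 := by
    intro l' hl'
    obtain ⟨l, hl, rfl⟩ := Finset.mem_image.mp hl'
    rw [Complex.add_re, Complex.ofReal_re, hre l hl]
    ring
  have hinj : ∀ x ∈ S, ∀ y ∈ S, x + (μ:ℂ) = y + (μ:ℂ) → x = y := fun x _ y _ hxy =>
    add_right_cancel hxy
  -- the shifted scalar function equals ⟪w, h t⟫ e^{μ t}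
  have hident : ∀ t : ℝ, (∑ l' ∈ S', ∑ j ∈ Finset.range (d+1),
      cc (l' - (μ:ℂ)) j * (t:ℂ)^j * Complex.exp (l'*t))
      = (inner ℂ w (h t) : ℂ) * Complex.exp ((μ:ℂ)*t) := by
    intro t
    rw [hS'def, Finset.sum_image hinj, hφ, Finset.sum_mul]
    refine Finset.sum_congr rfl fun l hl => ?_
    have h1 : l + (μ:ℂ) - (μ:ℂ) = l := add_sub_cancel_right l _
    have h2 : Complex.exp ((l + (μ:ℂ))*t) = Complex.exp (l*t) * Complex.exp ((μ:ℂ)*t) := by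
      rw [← Complex.exp_add]; congr 1; ring
    rw [hcc l hl t]
    calc ∑ j ∈ Finset.range (d+1), cc (l + (μ:ℂ) - (μ:ℂ)) j * (t:ℂ)^j * Complex.exp ((l + (μ:ℂ))*t)
        = ∑ j ∈ Finset.range (d+1), cc l j * (t:ℂ)^j * (Complex.exp (l*t) * Complex.exp ((μ:ℂ)*t)) := by
          refine Finset.sum_congr rfl fun j _ => ?_
          rw [h1, h2]
      _ = Complex.exp (l*t) * (∑ j ∈ Finset.range (d+1), cc l j * (t:ℂ)^j) * Complex.exp ((μ:ℂ)*t) := by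
          rw [Finset.mul_sum, Finset.sum_mul]
          exact Finset.sum_congr rfl fun j _ => by ring
  -- tendsto zero
  have hten : Tendsto (fun t : ℝ => ∑ l' ∈ S', ∑ j ∈ Finset.range (d+1),
      cc (l' - (μ:ℂ)) j * (t:ℂ)^j * Complex.exp (l'*t)) atTop (nhds 0) := by
    rw [tendsto_zero_iff_norm_tendsto_zero]
    apply squeeze_zero' (Filter.Eventually.of_forall fun t => norm_nonneg _)
      (g := fun t => (‖w‖ * C) * Real.exp ((μ - ν) * t))
    · filter_upwards [hbd] with t hbt
      rw [hident t, norm_mul]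
      have he : ‖Complex.exp ((μ:ℂ)*t)‖ = Real.exp (μ*t) := by
        rw [Complex.norm_exp]
        congr 1
        rw [show ((μ:ℂ)*(t:ℂ)) = ((μ*t : ℝ) : ℂ) by push_cast; ring, Complex.ofReal_re]
      rw [he]
      have hin : ‖(inner ℂ w (h t) : ℂ)‖ ≤ ‖w‖ * (C * Real.exp (-ν*t)) :=
        le_trans (norm_inner_le_norm w (h t)) (by
          apply mul_le_mul_of_nonneg_left hbt (norm_nonneg w))
      calc ‖(inner ℂ w (h t) : ℂ)‖ * Real.exp (μ*t)
          ≤ (‖w‖ * (C * Real.exp (-ν*t))) * Real.exp (μ*t) :=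
            mul_le_mul_of_nonneg_right hin (Real.exp_nonneg _)
        _ = (‖w‖ * C) * Real.exp ((μ - ν) * t) := by
            rw [show (μ - ν)*t = -ν*t + μ*t by ring, Real.exp_add]; ring
    · have h1 : Tendsto (fun t : ℝ => (ν - μ) * t) atTop atTop :=
        Tendsto.const_mul_atTop (by linarith) tendsto_id
      have h2 := Real.tendsto_exp_neg_atTop_nhds_zero.comp h1
      have h3 : Tendsto (fun t : ℝ => Real.exp ((μ - ν) * t)) atTop (nhds 0) := by
        refine h2.congr fun t => ?_
        simp only [Function.comp]
        congr 1
        ring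
      simpa using h3.const_mul (‖w‖ * C)
  -- apply scalar vanishing
  have hvan := scalar_vanish d S' hS' (fun l' j => cc (l' - (μ:ℂ)) j) hten
  have hccz : ∀ l ∈ S, ∀ j, j ≤ d → cc l j = 0 := by
    intro l hl j hj
    have hmem : l + (μ:ℂ) ∈ S' := Finset.mem_image.mpr ⟨l, hl, rfl⟩
    have := hvan (l + (μ:ℂ)) hmem j hj
    simpa [add_sub_cancel_right] using this
  have hz : (inner ℂ w (h t₀) : ℂ) = 0 := by
    rw [hφ]
    apply Finset.sum_eq_zero
    intro l hl
    rw [hcc l hl t₀]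
    have : (∑ j ∈ Finset.range (d+1), cc l j * (t₀:ℂ)^j) = 0 :=
      Finset.sum_eq_zero fun j hj => by
        rw [hccz l hl j (by have := Finset.mem_range.mp hj; omega), zero_mul]
    rw [this, mul_zero]
  exact inner_self_eq_zero.mp hz

end Aux

/-- Lemma `invar1`(ii).  The complexification `X_ℂ` of a real inner product
space `X` is modelled by a complex inner product space `Y` with an additive, conjugate-linear,
norm-preserving involution `conjY` whose fixed-point set is `X`; so "`v ∈ X`" reads
`conjY v = v`.  If `g` is `X`-valued on `(T, ∞)` and, as an `X_ℂ`-valued function, has an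
asymptotic expansion `g(t) ∼ ∑_{k=1}^∞ g_k(t)` with `g_k ∈ 𝓕_E(-μ_k, X_ℂ)` for a strictly
increasing divergent sequence `(μ_k)` of nonnegative reals, then `g_k(t) ∈ X` for all `k`
and all `t ∈ ℝ`. -/
theorem expansion_terms_real_valued
    {Y : Type*} [NormedAddCommGroup Y] [InnerProductSpace ℂ Y]
    (conjY : Y → Y)
    (hconj_add : ∀ a b : Y, conjY (a + b) = conjY a + conjY b)
    (hconj_smul : ∀ (c : ℂ) (v : Y), conjY (c • v) = (starRingEnd ℂ c) • conjY v)
    (hconj_invol : ∀ v : Y, conjY (conjY v) = v)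
    (hconj_norm : ∀ v : Y, ‖conjY v‖ = ‖v‖)
    (T : ℝ) (g : ℝ → Y) (hgreal : ∀ t : ℝ, T < t → conjY (g t) = g t)
    (μseq : ℕ → ℝ) (hμnonneg : ∀ k, 0 ≤ μseq k) (hμmono : StrictMono μseq)
    (hμdiv : Tendsto μseq atTop atTop)
    (gk : ℕ → ℝ → Y) (hgk : ∀ k, FEmem (-(μseq k)) (gk k))
    (hgexp : ∀ N : ℕ, ∃ ν > μseq N,
      (fun t => g t - ∑ k ∈ Finset.range (N + 1), gk k t) =O[atTop]
        fun t => Real.exp (-ν * t)) :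
    ∀ (k : ℕ) (t : ℝ), conjY (gk k t) = gk k t := by

  suffices H : ∀ k : ℕ, ∀ t : ℝ, gk k t - conjY (gk k t) = 0 by
    intro k t
    have := H k t
    rw [sub_eq_zero] at this
    exact this.symm
  intro k
  induction k using Nat.strong_induction_on with
  | _ k IH =>
  obtain ⟨ν, hν, hO⟩ := hgexp k
  obtain ⟨C, hC⟩ := hO.bound
  have hFE : FEmem (-(μseq k)) (fun t => gk k t - conjY (gk k t)) :=
    FEmem_sub (hgk k) (FEmem_conj conjY hconj_add hconj_smul (hgk k))
  have hbd : ∀ᶠ t in atTop, ‖gk k t - conjY (gk k t)‖ ≤ (2*C) * Real.exp (-ν * t) := by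
    filter_upwards [hC, eventually_gt_atTop T] with t h1 h2
    have hexpnn : ‖Real.exp (-ν * t)‖ = Real.exp (-ν * t) :=
      Real.norm_eq_abs _ ▸ abs_of_pos (Real.exp_pos _)
    rw [hexpnn] at h1
    have hconjg : conjY (g t) = g t := hgreal t h2
    have hsum_eq : (∑ j ∈ Finset.range (k+1), (gk j t - conjY (gk j t)))
        = gk k t - conjY (gk k t) :=
      Finset.sum_eq_single_of_mem k (Finset.self_mem_range_succ k)
        (fun j hj hne => IH j (by have := Finset.mem_range.mp hj; omega) t)
    have hsplit : (∑ j ∈ Finset.range (k+1), (gk j t - conjY (gk j t)))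
        = (∑ j ∈ Finset.range (k+1), gk j t) - conjY (∑ j ∈ Finset.range (k+1), gk j t) := by
      rw [Finset.sum_sub_distrib, conj_sum conjY hconj_add hconj_smul]
    have hE : conjY (g t - ∑ j ∈ Finset.range (k+1), gk j t)
        = g t - conjY (∑ j ∈ Finset.range (k+1), gk j t) := by
      rw [conj_sub conjY hconj_add hconj_smul, hconjg]
    have hkey : gk k t - conjY (gk k t)
        = -(g t - ∑ j ∈ Finset.range (k+1), gk j t)
          + conjY (g t - ∑ j ∈ Finset.range (k+1), gk j t) := by
      rw [← hsum_eq, hsplit, hE]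
      abel
    rw [hkey]
    calc ‖-(g t - ∑ j ∈ Finset.range (k+1), gk j t)
          + conjY (g t - ∑ j ∈ Finset.range (k+1), gk j t)‖
        ≤ ‖-(g t - ∑ j ∈ Finset.range (k+1), gk j t)‖
          + ‖conjY (g t - ∑ j ∈ Finset.range (k+1), gk j t)‖ := norm_add_le _ _
      _ = ‖g t - ∑ j ∈ Finset.range (k+1), gk j t‖
          + ‖g t - ∑ j ∈ Finset.range (k+1), gk j t‖ := by
          rw [norm_neg, hconj_norm]
      _ ≤ C * Real.exp (-ν*t) + C * Real.exp (-ν*t) := add_le_add h1 h1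
      _ = (2*C) * Real.exp (-ν*t) := by ring
  exact core (μseq k) ν hν _ hFE (2*C) hbd
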